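/- The Kullback–Leibler divergence between two d-variate normals, expressed as D_KL((μ₁,Σ₁),(μ₂,Σ₂)) = ½(tr(Σ₂⁻¹Σ₁) − d + (μ₂−μ₁)ᵀΣ₂⁻¹(μ₂−μ₁) + log(det Σ₂/det Σ₁)), is preserved by the Calvo–Oller embedding: D_KL((μ₁,Σ₁),(μ₂,Σ₂)) equals the KL divergence between the centered (d+1)-variate normals with covariances P̄₁ = f(μ₁,Σ₁) and P̄₂ = f(μ₂,Σ₂), namely ½(tr(P̄₂⁻¹P̄₁) − (d+1) + log(det P̄₂/det P̄₁)). -/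

import Mathlib

open Matrix

lemma ofConst (a : ℝ) : (of fun _ _ => a : Matrix (Fin 1) (Fin 1) ℝ) = a • 1 := by
  ext i j; fin_cases i; fin_cases j; simp

lemma trace_fromBlocks' {n m : ℕ} (A : Matrix (Fin n) (Fin n) ℝ) (B : Matrix (Fin n) (Fin m) ℝ)
    (C : Matrix (Fin m) (Fin n) ℝ) (D : Matrix (Fin m) (Fin m) ℝ) :
    (fromBlocks A B C D).trace = A.trace + D.trace := by
  simp [Matrix.trace, Fintype.sum_sum_type, fromBlocks]

lemma vecMulVec_eq1 {m n : Type*} (w : m → ℝ) (v : n → ℝ) :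
    vecMulVec w v = replicateCol (Fin 1) w * replicateRow (Fin 1) v := by
  ext; simp [vecMulVec, mul_apply]

lemma trace_rc1 {n : Type*} [Fintype n] (a b : n → ℝ) :
    (replicateCol (Fin 1) a * replicateRow (Fin 1) b).trace = a ⬝ᵥ b := by
  simp [Matrix.trace, mul_apply, dotProduct]

/-- Calvo–Oller embedding of normal parameters into the SPD cone. -/
noncomputable def coEmbed {d : ℕ} (μ : Fin d → ℝ) (S : Matrix (Fin d) (Fin d) ℝ) :
    Matrix (Fin d ⊕ Fin 1) (Fin d ⊕ Fin 1) ℝ :=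
  fromBlocks (S + vecMulVec μ μ) (replicateCol (Fin 1) μ) (replicateRow (Fin 1) μ) 1

lemma coEmbed_det {d : ℕ} (μ : Fin d → ℝ) (S : Matrix (Fin d) (Fin d) ℝ) :
    (coEmbed μ S).det = S.det := by
  rw [coEmbed, det_fromBlocks_one₂₂, vecMulVec_eq1]
  simp

lemma coEmbed_inv {d : ℕ} (μ : Fin d → ℝ) (S : Matrix (Fin d) (Fin d) ℝ) (h : S.PosDef) :
    (coEmbed μ S)⁻¹ =
      fromBlocks S⁻¹ (-(replicateCol (Fin 1) (S⁻¹ *ᵥ μ))) (-(replicateRow (Fin 1) (μ ᵥ* S⁻¹)))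
        ((1 + μ ⬝ᵥ S⁻¹ *ᵥ μ) • (1 : Matrix (Fin 1) (Fin 1) ℝ)) := by
  have hdet : S.det ≠ 0 := h.det_pos.ne'
  have hSK : S * S⁻¹ = 1 := mul_nonsing_inv S hdet.isUnit
  apply inv_eq_right_inv
  rw [coEmbed, fromBlocks_multiply]
  have hTL : (S + vecMulVec μ μ) * S⁻¹ + replicateCol (Fin 1) μ * -(replicateRow (Fin 1) (μ ᵥ* S⁻¹)) = 1 := by
    rw [add_mul, hSK, vecMulVec_eq1, Matrix.mul_assoc, ← replicateRow_vecMul, Matrix.mul_neg]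
    abel
  have hTR : (S + vecMulVec μ μ) * -(replicateCol (Fin 1) (S⁻¹ *ᵥ μ))
      + replicateCol (Fin 1) μ * ((1 + μ ⬝ᵥ S⁻¹ *ᵥ μ) • (1 : Matrix (Fin 1) (Fin 1) ℝ)) = 0 := by
    rw [Matrix.mul_neg, Matrix.add_mul, ← replicateCol_mulVec, mulVec_mulVec, hSK, one_mulVec,
      vecMulVec_eq1, Matrix.mul_assoc, replicateRow_mul_replicateCol, ofConst, Matrix.mul_smul,
      Matrix.mul_one, Matrix.mul_smul, Matrix.mul_one, add_smul, one_smul]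
    abel
  have hBL : replicateRow (Fin 1) μ * S⁻¹
      + (1 : Matrix (Fin 1) (Fin 1) ℝ) * -(replicateRow (Fin 1) (μ ᵥ* S⁻¹)) = 0 := by
    rw [← replicateRow_vecMul, Matrix.one_mul]; abel
  have hBR : replicateRow (Fin 1) μ * -(replicateCol (Fin 1) (S⁻¹ *ᵥ μ))
      + (1 : Matrix (Fin 1) (Fin 1) ℝ) * ((1 + μ ⬝ᵥ S⁻¹ *ᵥ μ) • (1 : Matrix (Fin 1) (Fin 1) ℝ))
      = 1 := by
    rw [Matrix.mul_neg, replicateRow_mul_replicateCol, ofConst, Matrix.one_mul, add_smul, one_smul]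
    abel
  rw [hTL, hTR, hBL, hBR, ← fromBlocks_one]

theorem stmt10 {d : ℕ} (μ₁ μ₂ : Fin d → ℝ) (S₁ S₂ : Matrix (Fin d) (Fin d) ℝ)
    (h₁ : S₁.PosDef) (h₂ : S₂.PosDef) :
    (1 / 2 : ℝ) * ((S₂⁻¹ * S₁).trace - d + (μ₂ - μ₁) ⬝ᵥ S₂⁻¹.mulVec (μ₂ - μ₁)
        + Real.log (S₂.det / S₁.det))
      = (1 / 2 : ℝ) * (((coEmbed μ₂ S₂)⁻¹ * coEmbed μ₁ S₁).trace - (d + 1)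
        + Real.log ((coEmbed μ₂ S₂).det / (coEmbed μ₁ S₁).det)) := by
  set K := S₂⁻¹ with hK
  -- symmetry of K
  have hsymm : S₂ᵀ = S₂ := by
    have h := h₂.isHermitian
    ext i j
    exact (by simpa using congrFun (congrFun h j) i : S₂ i j = S₂ j i).symm
  have hKT : Kᵀ = K := by rw [hK, transpose_nonsing_inv, hsymm]
  have hvm : ∀ v : Fin d → ℝ, v ᵥ* K = K *ᵥ v := by
    intro v
    rw [← hKT, vecMul_transpose, hKT]
  have hswap : ∀ u v : Fin d → ℝ, K *ᵥ u ⬝ᵥ v = u ⬝ᵥ K *ᵥ v := by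
    intro u v
    rw [dotProduct_mulVec, hvm]
  have hcross : μ₁ ⬝ᵥ K *ᵥ μ₂ = μ₂ ⬝ᵥ K *ᵥ μ₁ := by
    rw [← hswap, dotProduct_comm]
  -- trace computation
  have htr : ((coEmbed μ₂ S₂)⁻¹ * coEmbed μ₁ S₁).trace
      = (K * S₁).trace + (μ₂ - μ₁) ⬝ᵥ K *ᵥ (μ₂ - μ₁) + 1 := by
    rw [coEmbed_inv μ₂ S₂ h₂, coEmbed, fromBlocks_multiply, trace_fromBlocks']
    have hTL : (K * (S₁ + vecMulVec μ₁ μ₁) + -(replicateCol (Fin 1) (K *ᵥ μ₂)) * replicateRow (Fin 1) μ₁).trace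
        = (K * S₁).trace + μ₁ ⬝ᵥ K *ᵥ μ₁ - μ₂ ⬝ᵥ K *ᵥ μ₁ := by
      rw [Matrix.mul_add, Matrix.neg_mul, trace_add, trace_add, trace_neg, trace_rc1,
        trace_mul_comm K (vecMulVec μ₁ μ₁), vecMulVec_eq1, Matrix.mul_assoc,
        ← replicateRow_vecMul, trace_rc1, hvm, hswap]
      ring
    have hBR : (-(replicateRow (Fin 1) (μ₂ ᵥ* K)) * replicateCol (Fin 1) μ₁
        + ((1 + μ₂ ⬝ᵥ K *ᵥ μ₂) • (1 : Matrix (Fin 1) (Fin 1) ℝ)) * 1).trace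
        = 1 + μ₂ ⬝ᵥ K *ᵥ μ₂ - μ₂ ⬝ᵥ K *ᵥ μ₁ := by
      rw [Matrix.neg_mul, replicateRow_mul_replicateCol, ofConst, Matrix.mul_one, trace_add, trace_neg,
        trace_smul, trace_smul, trace_one, hvm, hswap]
      simp
      ring
    rw [hTL, hBR]
    have hq : (μ₂ - μ₁) ⬝ᵥ K *ᵥ (μ₂ - μ₁)
        = μ₂ ⬝ᵥ K *ᵥ μ₂ - 2 * (μ₂ ⬝ᵥ K *ᵥ μ₁) + μ₁ ⬝ᵥ K *ᵥ μ₁ := by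
      rw [mulVec_sub, dotProduct_sub, sub_dotProduct, sub_dotProduct, hcross]
      ring
    rw [hq]; ring
  rw [htr, coEmbed_det, coEmbed_det]
  push_cast
  ring
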